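/- arXiv:1305.5743 — 3 statements merged into one kernel-verified Lean document; each statement's English description precedes it below -/
import Mathlib

section
/- Let a be a strong divisibility sequence of positive integers that is periodic modulo m with period ℓ > 0. Then for any non-zero positive integers i, j, there exists an integer w such that a_{gcd(i+ℓ, j)} ≡ w · a_{gcd(i,j)} (mod m). -/
/-- If `a` is a strong divisibility sequence of positive integers, periodic modulo `m`
with period `ℓ > 0`, then for positive `i, j` there is an integer `w` with
`a_{gcd(i+ℓ,j)} ≡ w * a_{gcd(i,j)} (mod m)`. -/
theorem stmt_3 (m : ℤ) (ℓ : ℕ) (hm : 1 ≤ m) (hℓ : 0 < ℓ) (a : ℕ → ℤ)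
    (hpos : ∀ n, 0 < a n)
    (hsd : ∀ i j : ℕ, 0 < i → 0 < j → (Int.gcd (a i) (a j) : ℤ) = a (Nat.gcd i j))
    (hper : ∀ n, a (n + ℓ) ≡ a n [ZMOD m]) :
    ∀ i j : ℕ, 0 < i → 0 < j →
      ∃ w : ℤ, a (Nat.gcd (i + ℓ) j) ≡ w * a (Nat.gcd i j) [ZMOD m] := by
  intro i j hi hj
  obtain ⟨ci, hci⟩ : a (Nat.gcd i j) ∣ a i := by
    rw [← hsd i j hi hj]; exact Int.gcd_dvd_left _ _
  obtain ⟨cj, hcj⟩ : a (Nat.gcd i j) ∣ a j := by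
    rw [← hsd i j hi hj]; exact Int.gcd_dvd_right _ _
  refine ⟨Int.gcdA (a (i+ℓ)) (a j) * ci + Int.gcdB (a (i+ℓ)) (a j) * cj, ?_⟩
  have h1 : (Int.gcd (a (i+ℓ)) (a j) : ℤ) = a (Nat.gcd (i+ℓ) j) := hsd _ _ (by omega) hj
  calc a (Nat.gcd (i+ℓ) j)
      = a (i+ℓ) * Int.gcdA (a (i+ℓ)) (a j) + a j * Int.gcdB (a (i+ℓ)) (a j) := by
        rw [← h1]; exact Int.gcd_eq_gcd_ab _ _
    _ ≡ a i * Int.gcdA (a (i+ℓ)) (a j) + a j * Int.gcdB (a (i+ℓ)) (a j) [ZMOD m] :=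
        ((hper i).mul_right _).add_right _
    _ = (Int.gcdA (a (i+ℓ)) (a j) * ci + Int.gcdB (a (i+ℓ)) (a j) * cj) * a (Nat.gcd i j) := by
        rw [hci, hcj]; ring
end

section
/- Let a : ℕ → ℤ satisfy the linear recurrence a_{i+k} = Σ_{j=1}^{k} f_j a_{i+j-1} for all i ≥ 1 with k ≥ 1, and suppose ℓ > k-1. If for all i ∈ {1,...,k} the congruences f_i ≡ a_i (mod m), a_{2i+ℓ-k-1} ≡ 1 (mod m), and Σ_{j ∈ {1,...,k}\{i}} f_j · a_{i+ℓ-k+j-1} ≡ 0 (mod m) hold, then a is periodic modulo m with period ℓ, i.e., a_{n+ℓ} ≡ a_n (mod m) for all n ≥ 1. -/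
lemma sum_modeq_aux (m : ℤ) (s : Finset ℕ) (c d : ℕ → ℤ)
    (h : ∀ j ∈ s, c j ≡ d j [ZMOD m]) :
    (∑ j ∈ s, c j) ≡ (∑ j ∈ s, d j) [ZMOD m] := by
  classical
  induction s using Finset.induction with
  | empty => simp [Int.ModEq.refl]
  | @insert x t hx ih =>
    rw [Finset.sum_insert hx, Finset.sum_insert hx]
    exact (h x (Finset.mem_insert_self x t)).add
      (ih fun j hj => h j (Finset.mem_insert_of_mem hj))

/-- Sufficient congruence conditions on the coefficients and terms for a linear
recurrence sequence to be periodic modulo `m` with period `ℓ > k - 1`. -/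
theorem stmt_8 (m : ℤ) (k ℓ : ℕ) (hm : 1 ≤ m) (hk : 1 ≤ k) (hℓ : k - 1 < ℓ)
    (f : ℕ → ℤ) (a : ℕ → ℤ)
    (ha : ∀ i ≥ 1, a (i + k) = ∑ j ∈ Finset.Icc 1 k, f j * a (i + j - 1))
    (h1 : ∀ i ∈ Finset.Icc 1 k, f i ≡ a i [ZMOD m])
    (h2 : ∀ i ∈ Finset.Icc 1 k, a (2 * i + ℓ - k - 1) ≡ 1 [ZMOD m])
    (h3 : ∀ i ∈ Finset.Icc 1 k,
      (∑ j ∈ (Finset.Icc 1 k).erase i, f j * a (i + ℓ - k + j - 1)) ≡ 0 [ZMOD m]) :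
    ∀ n ≥ 1, a (n + ℓ) ≡ a n [ZMOD m] := by
  have hℓk : k ≤ ℓ := by omega
  intro n
  induction n using Nat.strong_induction_on with
  | _ n ih =>
  intro hn
  rcases le_or_gt n k with h | h
  · -- base case: 1 ≤ n ≤ k
    have hmem : n ∈ Finset.Icc 1 k := Finset.mem_Icc.mpr ⟨hn, h⟩
    have key : a (n + ℓ) = ∑ j ∈ Finset.Icc 1 k, f j * a (n + ℓ - k + j - 1) := by
      have := ha (n + ℓ - k) (by omega)
      rwa [show n + ℓ - k + k = n + ℓ by omega] at this
    rw [key, ← Finset.add_sum_erase _ _ hmem]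
    have e1 : n + ℓ - k + n - 1 = 2 * n + ℓ - k - 1 := by omega
    have hA : f n * a (n + ℓ - k + n - 1) ≡ a n * 1 [ZMOD m] := by
      rw [e1]; exact (h1 n hmem).mul (h2 n hmem)
    have hB := h3 n hmem
    calc f n * a (n + ℓ - k + n - 1)
          + ∑ j ∈ (Finset.Icc 1 k).erase n, f j * a (n + ℓ - k + j - 1)
        ≡ a n * 1 + 0 [ZMOD m] := hA.add hB
      _ = a n := by ring
  · -- inductive step: n > k
    have hi : 1 ≤ n - k := by omega
    have hrec1 := ha (n - k) hi
    have hrec2 := ha (n - k + ℓ) (by omega)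
    rw [show n - k + k = n by omega] at hrec1
    rw [show n - k + ℓ + k = n + ℓ by omega] at hrec2
    rw [hrec1, hrec2]
    apply sum_modeq_aux
    intro j hj
    obtain ⟨hj1, hj2⟩ := Finset.mem_Icc.mp hj
    have e2 : n - k + ℓ + j - 1 = (n - k + j - 1) + ℓ := by omega
    rw [e2]
    exact (Int.ModEq.refl (f j)).mul (ih (n - k + j - 1) (by omega) (by omega))
end

section
/- Let a : ℕ → ℤ satisfy a_{i+k} = Σ_{j=1}^{k} f_j a_{i+j-1} for all i ≥ 1 with k ≥ 2, and define C_{k,1} = 1 and C_{k,n} = Σ_{j=1}^{n-1} f_{k-j+1} C_{k,n-j} for 2 ≤ n ≤ k. Then for all 1 ≤ i < k: a_{k+i} = Σ_{m=1}^{i} a_m Σ_{j=1}^{m} f_j C_{k,i-m+j} + Σ_{m=i+1}^{k} a_m Σ_{j=1}^{i} f_{m-i+j} C_{k,j}. -/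
/-- Expression of `a_{k+i}` (`1 ≤ i < k`) as a linear combination of the initial values
`a_1, ..., a_k` with coefficients built from the auxiliary sequence `C_{k,n}`. -/
theorem stmt_11 (k : ℕ) (hk : 2 ≤ k) (f : ℕ → ℤ) (a : ℕ → ℤ) (C : ℕ → ℤ)
    (ha : ∀ i ≥ 1, a (i + k) = ∑ j ∈ Finset.Icc 1 k, f j * a (i + j - 1))
    (hC1 : C 1 = 1)
    (hCrec : ∀ n, 2 ≤ n → n ≤ k →
      C n = ∑ j ∈ Finset.Icc 1 (n - 1), f (k - j + 1) * C (n - j)) :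
    ∀ i, 1 ≤ i → i < k →
      a (k + i) =
        (∑ m ∈ Finset.Icc 1 i, a m * ∑ j ∈ Finset.Icc 1 m, f j * C (i - m + j)) +
        ∑ m ∈ Finset.Icc (i + 1) k, a m * ∑ j ∈ Finset.Icc 1 i, f (m - i + j) * C j := by
  classical
  set S : ℕ → ℤ := fun r => ∑ m ∈ Finset.Icc r k, f (m - r + 1) * a m with hS
  -- Key lemma: a (k+i) = ∑_{t=1}^i C t * S (i+1-t)
  have key : ∀ i, 1 ≤ i → i < k →
      a (k + i) = ∑ t ∈ Finset.Icc 1 i, C t * S (i + 1 - t) := by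
    intro i
    induction i using Nat.strong_induction_on with
    | _ i IH =>
    intro hi1 hik
    have h1 : a (k + i) = ∑ j ∈ Finset.Icc 1 k, f j * a (i + j - 1) := by
      rw [Nat.add_comm k i]; exact ha i hi1
    have hIcc : ∀ b : ℕ, Finset.Icc 1 b = Finset.Ioc 0 b := by
      intro b; ext x; simp [Finset.mem_Icc, Finset.mem_Ioc]; omega
    have hsplit : ∑ j ∈ Finset.Icc 1 k, f j * a (i + j - 1)
        = (∑ j ∈ Finset.Ioc 0 (k - i + 1), f j * a (i + j - 1))
          + ∑ j ∈ Finset.Ioc (k - i + 1) k, f j * a (i + j - 1) := by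
      rw [hIcc, Finset.sum_Ioc_consecutive _ (by omega) (by omega)]
    -- first chunk equals S i
    have hA : ∑ j ∈ Finset.Ioc 0 (k - i + 1), f j * a (i + j - 1) = S i := by
      show _ = ∑ m ∈ Finset.Icc i k, f (m - i + 1) * a m
      refine Finset.sum_nbij' (fun j => i + j - 1) (fun m => m - i + 1) ?_ ?_ ?_ ?_ ?_
      · intro j hj; simp only [Finset.mem_Ioc] at hj; simp only [Finset.mem_Icc]; omega
      · intro m hm; simp only [Finset.mem_Icc] at hm; simp only [Finset.mem_Ioc]; omega
      · intro j hj; simp only [Finset.mem_Ioc] at hj; omega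
      · intro m hm; simp only [Finset.mem_Icc] at hm; omega
      · intro j hj; simp only [Finset.mem_Ioc] at hj
        rw [show i + j - 1 - i + 1 = j from by omega]
    -- second chunk
    have hB : ∑ j ∈ Finset.Ioc (k - i + 1) k, f j * a (i + j - 1)
        = ∑ r ∈ Finset.Icc 1 (i - 1), f (k - i + 1 + r) * a (k + r) := by
      refine Finset.sum_nbij' (fun j => i + j - 1 - k) (fun r => k - i + 1 + r) ?_ ?_ ?_ ?_ ?_
      · intro j hj; simp only [Finset.mem_Ioc] at hj; simp only [Finset.mem_Icc]; omega
      · intro r hr; simp only [Finset.mem_Icc] at hr; simp only [Finset.mem_Ioc]; omega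
      · intro j hj; simp only [Finset.mem_Ioc] at hj; omega
      · intro r hr; simp only [Finset.mem_Icc] at hr; omega
      · intro j hj; simp only [Finset.mem_Ioc] at hj
        rw [show k - i + 1 + (i + j - 1 - k) = j from by omega,
          show k + (i + j - 1 - k) = i + j - 1 from by omega]
    -- rewrite a (k+r) via IH
    have hB2 : ∑ r ∈ Finset.Icc 1 (i - 1), f (k - i + 1 + r) * a (k + r)
        = ∑ r ∈ Finset.Icc 1 (i - 1), f (k - i + 1 + r)
            * ∑ t ∈ Finset.Icc 1 r, C t * S (r + 1 - t) := by
      refine Finset.sum_congr rfl ?_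
      intro r hr; simp only [Finset.mem_Icc] at hr
      rw [IH r (by omega) (by omega) (by omega)]
    rw [h1, hsplit, hA, hB, hB2]
    -- RHS: peel off t = 1 and use the C recurrence
    have hR : ∑ t ∈ Finset.Icc 1 i, C t * S (i + 1 - t)
        = S i + ∑ t ∈ Finset.Icc 2 i, C t * S (i + 1 - t) := by
      have : Finset.Icc 1 i = insert 1 (Finset.Icc 2 i) := by
        ext x; simp [Finset.mem_Icc]; omega
      rw [this, Finset.sum_insert (by simp)]
      have : i + 1 - 1 = i := by omega
      rw [this, hC1, one_mul]
    rw [hR]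
    congr 1
    -- double-sum identity
    have hC : ∑ t ∈ Finset.Icc 2 i, C t * S (i + 1 - t)
        = ∑ t ∈ Finset.Icc 2 i, ∑ s ∈ Finset.Icc 1 (t - 1),
            f (k - s + 1) * C (t - s) * S (i + 1 - t) := by
      refine Finset.sum_congr rfl ?_
      intro t ht; simp only [Finset.mem_Icc] at ht
      rw [hCrec t (by omega) (by omega), Finset.sum_mul]
    rw [hC]
    have hL : ∀ r, f (k - i + 1 + r) * ∑ t ∈ Finset.Icc 1 r, C t * S (r + 1 - t)
        = ∑ t ∈ Finset.Icc 1 r, f (k - i + 1 + r) * (C t * S (r + 1 - t)) := by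
      intro r; rw [Finset.mul_sum]
    simp_rw [hL]
    rw [Finset.sum_sigma' (Finset.Icc 1 (i-1)) (fun r => Finset.Icc 1 r)
        (fun r t => f (k - i + 1 + r) * (C t * S (r + 1 - t)))]
    rw [Finset.sum_sigma' (Finset.Icc 2 i) (fun t => Finset.Icc 1 (t - 1))
        (fun t s => f (k - s + 1) * C (t - s) * S (i + 1 - t))]
    refine Finset.sum_nbij' (fun p => ⟨p.2 + (i - p.1), i - p.1⟩)
      (fun q => ⟨i - q.2, q.1 - q.2⟩) ?_ ?_ ?_ ?_ ?_
    · rintro ⟨r, t⟩ hp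
      simp only [Finset.mem_sigma, Finset.mem_Icc] at hp ⊢; omega
    · rintro ⟨t, s⟩ hq
      simp only [Finset.mem_sigma, Finset.mem_Icc] at hq ⊢; omega
    · rintro ⟨r, t⟩ hp
      simp only [Finset.mem_sigma, Finset.mem_Icc] at hp
      dsimp only
      rw [show i - (i - r) = r from by omega, show t + (i - r) - (i - r) = t from by omega]
    · rintro ⟨t, s⟩ hq
      simp only [Finset.mem_sigma, Finset.mem_Icc] at hq
      dsimp only
      rw [show i - (i - s) = s from by omega]
      rw [show t - s + s = t from by omega]
    · rintro ⟨r, t⟩ hp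
      simp only [Finset.mem_sigma, Finset.mem_Icc] at hp
      have e1 : k - (i - r) + 1 = k - i + 1 + r := by omega
      have e2 : t + (i - r) - (i - r) = t := by omega
      have e3 : i + 1 - (t + (i - r)) = r + 1 - t := by omega
      rw [e1, e2, e3]; ring
  -- now derive the stated formula
  intro i hi1 hik
  rw [key i hi1 hik]
  have hexp : ∀ t ∈ Finset.Icc 1 i,
      C t * S (i + 1 - t)
        = (∑ m ∈ Finset.Ioc (i - t) i, C t * (f (m - (i + 1 - t) + 1) * a m))
          + ∑ m ∈ Finset.Ioc i k, C t * (f (m - (i + 1 - t) + 1) * a m) := by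
    intro t ht; simp only [Finset.mem_Icc] at ht
    show C t * (∑ m ∈ Finset.Icc (i + 1 - t) k, f (m - (i + 1 - t) + 1) * a m) = _
    have h1 : Finset.Icc (i + 1 - t) k = Finset.Ioc (i - t) k := by
      ext x; simp [Finset.mem_Icc, Finset.mem_Ioc]; omega
    rw [h1, ← Finset.sum_Ioc_consecutive _ (by omega : i - t ≤ i) (by omega : i ≤ k),
      mul_add, Finset.mul_sum, Finset.mul_sum]
  rw [Finset.sum_congr rfl hexp, Finset.sum_add_distrib]
  congr 1
  · -- X part: bijection to first target sum
    have htgt : ∀ m ∈ Finset.Icc 1 i,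
        a m * ∑ j ∈ Finset.Icc 1 m, f j * C (i - m + j)
          = ∑ j ∈ Finset.Icc 1 m, a m * (f j * C (i - m + j)) := by
      intro m _; rw [Finset.mul_sum]
    rw [Finset.sum_congr rfl htgt]
    rw [Finset.sum_sigma' (Finset.Icc 1 i) (fun t => Finset.Ioc (i - t) i)
        (fun t m => C t * (f (m - (i + 1 - t) + 1) * a m))]
    rw [Finset.sum_sigma' (Finset.Icc 1 i) (fun m => Finset.Icc 1 m)
        (fun m j => a m * (f j * C (i - m + j)))]
    refine Finset.sum_nbij' (fun p => ⟨p.2, p.2 + p.1 - i⟩)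
      (fun q => ⟨i - q.1 + q.2, q.1⟩) ?_ ?_ ?_ ?_ ?_
    · rintro ⟨t, m⟩ hp
      simp only [Finset.mem_sigma, Finset.mem_Icc, Finset.mem_Ioc] at hp ⊢; omega
    · rintro ⟨m, j⟩ hq
      simp only [Finset.mem_sigma, Finset.mem_Icc, Finset.mem_Ioc] at hq ⊢; omega
    · rintro ⟨t, m⟩ hp
      simp only [Finset.mem_sigma, Finset.mem_Icc, Finset.mem_Ioc] at hp
      dsimp only
      rw [show i - m + (m + t - i) = t from by omega]
    · rintro ⟨m, j⟩ hq
      simp only [Finset.mem_sigma, Finset.mem_Icc, Finset.mem_Ioc] at hq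
      dsimp only
      rw [show m + (i - m + j) - i = j from by omega]
    · rintro ⟨t, m⟩ hp
      simp only [Finset.mem_sigma, Finset.mem_Icc, Finset.mem_Ioc] at hp
      have e1 : m - (i + 1 - t) + 1 = m + t - i := by omega
      have e2 : i - m + (m + t - i) = t := by omega
      rw [e1, e2]; ring
  · -- Y part: swap sums
    rw [Finset.sum_comm]
    have h1 : Finset.Ioc i k = Finset.Icc (i + 1) k := by
      ext x; simp [Finset.mem_Icc, Finset.mem_Ioc]
    rw [h1]
    refine Finset.sum_congr rfl ?_
    intro m hm; simp only [Finset.mem_Icc] at hm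
    rw [Finset.mul_sum]
    refine Finset.sum_congr rfl ?_
    intro t ht; simp only [Finset.mem_Icc] at ht
    have e1 : m - (i + 1 - t) + 1 = m - i + t := by omega
    rw [e1]; ring
end
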